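/- arXiv:1510.04590 — 3 statements merged into one kernel-verified Lean document; each statement's English description precedes it below -/
import Mathlib

section
/- If the cut set E ∩ (A × (V\A)) contains exactly one edge e, then ⊕_{v∈A} xor(v) = name(e). Hence if edge names are distinct, the unique cut edge can be recovered from the XOR value. -/
open Finset

private lemma two_nsmul_zero' {k : ℕ} (x : Fin k → ZMod 2) : 2 • x = 0 := by
  funext i
  simp [two_smul, CharTwo.add_self_eq_zero]

/-- If the cut `E ∩ (A × (V \ A))` contains exactly one edge `e`, then the XOR
over `v ∈ A` of the XOR of names of incident edges equals `name e`; hence if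
names are distinct the unique cut edge is recovered from the XOR value. -/
theorem xor_trick_unique_cut_edge {V : Type*} [Fintype V] [DecidableEq V]
    (G : SimpleGraph V) [DecidableRel G.Adj] (k : ℕ)
    (name : Sym2 V → (Fin k → ZMod 2)) (A : Finset V) (e : Sym2 V)
    (he : e ∈ G.edgeFinset.filter
        (fun e => ∃ u w, e = s(u, w) ∧ u ∈ A ∧ w ∉ A))
    (hcard : (G.edgeFinset.filter
        (fun e => ∃ u w, e = s(u, w) ∧ u ∈ A ∧ w ∉ A)).card = 1) :
    ∑ v ∈ A, ∑ e' ∈ G.incidenceFinset v, name e' = name e := by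
  classical
  set p : Sym2 V → Prop := fun e => ∃ u w, e = s(u, w) ∧ u ∈ A ∧ w ∉ A with hp
  have hcuteq : G.edgeFinset.filter p = {e} := by
    rw [Finset.eq_singleton_iff_unique_mem]
    exact ⟨he, fun x hx => Finset.card_le_one.mp (le_of_eq hcard) x hx e he⟩
  have step1 : ∑ v ∈ A, ∑ e' ∈ G.incidenceFinset v, name e'
      = ∑ e' ∈ G.edgeFinset, ((A.filter (fun v => v ∈ e')).card) • name e' := by
    simp_rw [SimpleGraph.incidenceFinset_eq_filter, Finset.sum_filter]
    rw [Finset.sum_comm]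
    congr 1
    funext e'
    rw [← Finset.sum_filter, Finset.sum_const]
  rw [step1, ← Finset.sum_filter_add_sum_filter_not G.edgeFinset p, hcuteq]
  have h1 : ∑ e' ∈ ({e} : Finset (Sym2 V)), ((A.filter (fun v => v ∈ e')).card) • name e'
      = name e := by
    rw [Finset.sum_singleton]
    obtain ⟨-, u, w, rfl, hu, hw⟩ := Finset.mem_filter.mp he
    have : A.filter (fun v => v ∈ s(u, w)) = {u} := by
      ext v
      simp only [Finset.mem_filter, Sym2.mem_iff, Finset.mem_singleton]
      constructor
      · rintro ⟨hv, rfl | rfl⟩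
        · rfl
        · exact absurd hv hw
      · rintro rfl; exact ⟨hu, Or.inl rfl⟩
    rw [this, Finset.card_singleton, one_smul]
  have h2 : ∑ e' ∈ G.edgeFinset.filter (fun e' => ¬ p e'),
      ((A.filter (fun v => v ∈ e')).card) • name e' = 0 := by
    apply Finset.sum_eq_zero
    intro e' he'
    obtain ⟨hmem, hnp⟩ := Finset.mem_filter.mp he'
    induction e' with
    | h u w =>
      have hadj : G.Adj u w := SimpleGraph.mem_edgeFinset.mp hmem
      have hne : u ≠ w := hadj.ne
      simp only [hp] at hnp
      push_neg at hnp
      by_cases hu : u ∈ A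
      · have hw : w ∈ A := hnp u w rfl hu
        have : A.filter (fun v => v ∈ s(u, w)) = {u, w} := by
          ext v
          simp only [Finset.mem_filter, Sym2.mem_iff, Finset.mem_insert, Finset.mem_singleton]
          constructor
          · rintro ⟨-, h⟩; exact h
          · rintro (rfl | rfl)
            · exact ⟨hu, Or.inl rfl⟩
            · exact ⟨hw, Or.inr rfl⟩
        rw [this, Finset.card_pair hne, two_nsmul_zero']
      · have hw : w ∉ A := fun hw => hu (hnp w u Sym2.eq_swap hw)
        have : A.filter (fun v => v ∈ s(u, w)) = ∅ := by
          ext v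
          simp only [Finset.mem_filter, Sym2.mem_iff, Finset.notMem_empty, iff_false]
          rintro ⟨hv, rfl | rfl⟩
          exacts [hu hv, hw hv]
        rw [this, Finset.card_empty, zero_smul]
  rw [h1, h2, add_zero]
end

section
/- Let C be a nonempty finite set of edges with |C| = s, and for each i = 0,…,2⌈log₂ n⌉ let E_i be a random subset of C where each element is included independently with probability 2^{-i}. If 2^{i} ≤ s ≤ 2^{i+1} for some i in range (which holds when 1 ≤ s ≤ n²), then the probability that |E_i ∩ C| = 1 is at least s · 2^{-i} · (1 - 2^{-i})^{s-1} ≥ 1/(2e) > 1/9. -/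
open MeasureTheory Finset

/-- The function `b ↦ b·p·(1-p)^(b-1)` is decreasing once `b·p ≥ 1`. -/
lemma aux_decr (p : ℝ) (hp0 : 0 ≤ p) (hp1 : p ≤ 1) (a : ℕ) (ha : 1 ≤ (a : ℝ) * p) :
    ∀ b : ℕ, a ≤ b → (b : ℝ) * p * (1 - p) ^ (b - 1) ≤ (a : ℝ) * p * (1 - p) ^ (a - 1) := by
  intro b hb
  induction b, hb using Nat.le_induction with
  | base => exact le_rfl
  | succ b hb IH =>
    have ha1 : 1 ≤ a := by
      by_contra h
      push_neg at h
      interval_cases a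
      simp at ha; linarith
    have hb1 : 1 ≤ b := le_trans ha1 hb
    have hbp : 1 ≤ (b : ℝ) * p := by
      refine le_trans ha (mul_le_mul_of_nonneg_right ?_ hp0)
      exact_mod_cast hb
    have hkey : ((b : ℝ) + 1) * (1 - p) ≤ (b : ℝ) := by nlinarith
    have hpow : (0 : ℝ) ≤ p * (1 - p) ^ (b - 1) :=
      mul_nonneg hp0 (pow_nonneg (by linarith) _)
    have hsplit : ((b + 1 : ℕ) : ℝ) * p * (1 - p) ^ ((b + 1) - 1)
        = (((b : ℝ) + 1) * (1 - p)) * (p * (1 - p) ^ (b - 1)) := by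
      have : (b + 1) - 1 = (b - 1) + 1 := by omega
      rw [this, pow_succ]
      push_cast
      ring
    calc ((b + 1 : ℕ) : ℝ) * p * (1 - p) ^ ((b + 1) - 1)
        = (((b : ℝ) + 1) * (1 - p)) * (p * (1 - p) ^ (b - 1)) := hsplit
      _ ≤ (b : ℝ) * (p * (1 - p) ^ (b - 1)) := mul_le_mul_of_nonneg_right hkey hpow
      _ = (b : ℝ) * p * (1 - p) ^ (b - 1) := by ring
      _ ≤ (a : ℝ) * p * (1 - p) ^ (a - 1) := IH

/-- `(1 - 1/m)^(m-1) ≥ e⁻¹` for `m ≥ 2`. -/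
lemma aux_exp (m : ℕ) (hm : 2 ≤ m) : Real.exp (-1) ≤ (1 - (m : ℝ)⁻¹) ^ (m - 1) := by
  have hk : 1 ≤ m - 1 := by omega
  have hkR : (0 : ℝ) < ((m - 1 : ℕ) : ℝ) := by exact_mod_cast Nat.lt_of_lt_of_le Nat.zero_lt_one hk
  have hmR : (0 : ℝ) < (m : ℝ) := by positivity
  have hcast : ((m - 1 : ℕ) : ℝ) = (m : ℝ) - 1 := by
    have : 1 ≤ m := by omega
    push_cast [this]; ring
  have h1 : Real.exp (-1) = (Real.exp (-(((m - 1 : ℕ) : ℝ))⁻¹)) ^ (m - 1) := by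
    rw [← Real.exp_nat_mul]
    congr 1
    rw [mul_neg, mul_inv_cancel₀ (ne_of_gt hkR)]
  rw [h1]
  apply pow_le_pow_left₀ (Real.exp_nonneg _)
  -- exp(-(1/(m-1))) ≤ 1 - 1/m
  have hm1 : (0 : ℝ) < (m : ℝ) - 1 := by rw [← hcast]; exact hkR
  have h4 : (m : ℝ) / ((m : ℝ) - 1) ≤ Real.exp ((((m - 1 : ℕ) : ℝ))⁻¹) := by
    have h2 := Real.add_one_le_exp ((((m - 1 : ℕ) : ℝ))⁻¹)
    have h3 : (m : ℝ) / ((m : ℝ) - 1) = (((m - 1 : ℕ) : ℝ))⁻¹ + 1 := by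
      rw [hcast]
      field_simp
      ring
    rw [h3]; exact h2
  rw [Real.exp_neg]
  rw [inv_le_iff_one_le_mul₀ (Real.exp_pos _)]
  have h5 : (1 - (m : ℝ)⁻¹) = ((m : ℝ) - 1) / (m : ℝ) := by field_simp
  rw [h5]
  calc (1 : ℝ) = ((m : ℝ) / ((m : ℝ) - 1)) * (((m : ℝ) - 1) / (m : ℝ)) := by field_simp
    _ ≤ Real.exp ((((m - 1 : ℕ) : ℝ))⁻¹) * (((m : ℝ) - 1) / (m : ℝ)) :=
        mul_le_mul_of_nonneg_right h4 (by positivity)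
    _ = (((m : ℝ) - 1) / (m : ℝ)) * Real.exp ((((m - 1 : ℕ) : ℝ))⁻¹) := mul_comm _ _

/-- The analytic bound: `s·2⁻ⁱ·(1-2⁻ⁱ)^(s-1) ≥ 1/(2e)` when `2^i ≤ s < 2^(i+1)`. -/
lemma aux_main (i s : ℕ) (hlow : 2 ^ i ≤ s) (hhigh : s < 2 ^ (i + 1)) :
    1 / (2 * Real.exp 1) ≤ (s : ℝ) * (2 : ℝ)⁻¹ ^ i * (1 - (2 : ℝ)⁻¹ ^ i) ^ (s - 1) := by
  have hE1 : (1 : ℝ) ≤ Real.exp 1 := by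
    have := Real.add_one_le_exp (1 : ℝ); linarith
  rcases Nat.eq_zero_or_pos i with hi | hi
  · subst hi
    have hs1 : s = 1 := by omega
    subst hs1
    have hgoal : ((1 : ℕ) : ℝ) * (2 : ℝ)⁻¹ ^ 0 * (1 - (2 : ℝ)⁻¹ ^ 0) ^ (1 - 1) = 1 := by
      norm_num
    rw [hgoal, div_le_one (by positivity)]
    linarith
  · set m : ℕ := 2 ^ i with hm
    have hm2 : 2 ≤ m := by
      calc 2 = 2 ^ 1 := by norm_num
        _ ≤ 2 ^ i := Nat.pow_le_pow_right (by norm_num) hi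
    have hmR : (0 : ℝ) < (m : ℝ) := by positivity
    have hpm : (2 : ℝ)⁻¹ ^ i = ((m : ℝ))⁻¹ := by
      rw [hm]; push_cast; rw [inv_pow]
    set p : ℝ := (2 : ℝ)⁻¹ ^ i with hpdef
    have hp0 : 0 ≤ p := by positivity
    have hp1 : p ≤ 1 := by
      rw [hpm]
      rw [inv_le_one_iff₀]
      right; exact_mod_cast Nat.one_le_two_pow
    have hphalf : p ≤ 1 / 2 := by
      rw [hpm]
      have h2m : (2 : ℝ) ≤ (m : ℝ) := by exact_mod_cast hm2
      rw [inv_le_comm₀ hmR (by norm_num), show ((1:ℝ)/2)⁻¹ = 2 by norm_num]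
      exact h2m
    have hsp : 1 ≤ (s : ℝ) * p := by
      rw [hpm]
      have hms : (m : ℝ) ≤ (s : ℝ) := by exact_mod_cast hlow
      calc (1 : ℝ) = (m : ℝ) * (m : ℝ)⁻¹ := by field_simp
        _ ≤ (s : ℝ) * (m : ℝ)⁻¹ := by
            apply mul_le_mul_of_nonneg_right hms (by positivity)
    have hsb : s ≤ 2 * m - 1 := by
      have : s < 2 * m := by
        calc s < 2 ^ (i + 1) := hhigh
          _ = 2 * m := by rw [hm]; ring
      omega
    -- f s ≥ f (2m-1)
    have hstep1 : ((2 * m - 1 : ℕ) : ℝ) * p * (1 - p) ^ ((2 * m - 1) - 1)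
        ≤ (s : ℝ) * p * (1 - p) ^ (s - 1) :=
      aux_decr p hp0 hp1 s hsp (2 * m - 1) hsb
    refine le_trans ?_ hstep1
    -- compute f (2m-1)
    have hc1 : ((2 * m - 1 : ℕ) : ℝ) = 2 * (m : ℝ) - 1 := by
      have : 1 ≤ 2 * m := by omega
      push_cast [this]; ring
    have hc2 : (2 * m - 1) - 1 = (m - 1) * 2 := by omega
    have hexp : Real.exp (-1) ≤ (1 - p) ^ (m - 1) := by
      rw [hpm]; exact aux_exp m hm2
    have hexp2 : Real.exp (-1) ^ 2 ≤ ((1 - p) ^ (m - 1)) ^ 2 :=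
      pow_le_pow_left₀ (Real.exp_nonneg _) hexp 2
    have hmulp : (3 : ℝ) / 2 ≤ ((2 * m - 1 : ℕ) : ℝ) * p := by
      rw [hc1, hpm]
      have : (2 * (m : ℝ) - 1) * (m : ℝ)⁻¹ = 2 - (m : ℝ)⁻¹ := by
        field_simp
      rw [this]
      have : (m : ℝ)⁻¹ ≤ 1 / 2 := by rw [← hpm]; exact hphalf
      linarith
    have hfin : (3 : ℝ) / 2 * Real.exp (-1) ^ 2
        ≤ ((2 * m - 1 : ℕ) : ℝ) * p * (1 - p) ^ ((2 * m - 1) - 1) := by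
      rw [hc2, pow_mul]
      exact mul_le_mul hmulp hexp2 (by positivity) (by positivity)
    refine le_trans ?_ hfin
    -- 1/(2e) ≤ 3/2 · e⁻²
    have hE3 : Real.exp 1 < 3 := by
      have := Real.exp_one_lt_d9; linarith
    have hEpos : (0 : ℝ) < Real.exp 1 := Real.exp_pos 1
    rw [Real.exp_neg]
    rw [div_le_iff₀ (by positivity)]
    have h9 : ((Real.exp 1)⁻¹) * Real.exp 1 = 1 := by field_simp
    nlinarith [sq_nonneg ((Real.exp 1)⁻¹), mul_pos (inv_pos.mpr hEpos) hEpos]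


/-- Sampling at the right level isolates one cut edge: if `C` has `s` elements
with `2^i ≤ s ≤ 2^(i+1)`, and each element of `C` is kept independently with
probability `2^(-i)`, then the probability that exactly one element survives is
at least `s·2^(-i)·(1-2^(-i))^(s-1) ≥ 1/(2e) > 1/9`. -/
theorem sample_isolates_unique_edge {α : Type*} (C : Finset α) (n i : ℕ)
    {Ω : Type*} [MeasurableSpace Ω] (μ : Measure Ω) [IsProbabilityMeasure μ]
    (sel : C → Ω → Bool) (hmeas : ∀ e, Measurable (sel e))
    (hindep : ProbabilityTheory.iIndepFun sel μ)
    (hprob : ∀ e : C, (μ {ω | sel e ω = true}).toReal = (2 : ℝ)⁻¹ ^ i)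
    (hs : C.card ≠ 0) (hsn : C.card ≤ n ^ 2)
    (hlow : 2 ^ i ≤ C.card) (hhigh : C.card < 2 ^ (i + 1)) :
    (μ {ω | (Finset.univ.filter (fun e : C => sel e ω = true)).card = 1}).toReal
        ≥ (C.card : ℝ) * (2 : ℝ)⁻¹ ^ i * (1 - (2 : ℝ)⁻¹ ^ i) ^ (C.card - 1)
      ∧ (C.card : ℝ) * (2 : ℝ)⁻¹ ^ i * (1 - (2 : ℝ)⁻¹ ^ i) ^ (C.card - 1)
          ≥ 1 / (2 * Real.exp 1)
      ∧ 1 / (2 * Real.exp 1) > 1 / 9 := by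
  classical
  refine ⟨?_, aux_main i C.card hlow hhigh, ?_⟩
  · -- probability part
    set p : ℝ := (2 : ℝ)⁻¹ ^ i with hpdef
    have hp0 : 0 ≤ p := by positivity
    set T : Set Ω :=
      {ω | (Finset.univ.filter (fun e : C => sel e ω = true)).card = 1} with hT
    set Sets : C → C → Set Bool := fun e e' => if e' = e then {true} else {false} with hSets
    set A : C → Set Ω := fun e => ⋂ e' ∈ (univ : Finset C), sel e' ⁻¹' (Sets e e') with hA
    have hSets_meas : ∀ e e', MeasurableSet (Sets e e') := by
      intro e e'
      simp only [hSets]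
      split <;> exact measurableSet_singleton _
    have hA_meas : ∀ e, MeasurableSet (A e) := by
      intro e
      exact MeasurableSet.biInter (Finset.countable_toSet _)
        (fun e' _ => (hmeas e') (hSets_meas e e'))
    have hmemA : ∀ e ω, ω ∈ A e ↔ (sel e ω = true ∧ ∀ e' : C, e' ≠ e → sel e' ω = false) := by
      intro e ω
      simp only [hA, Set.mem_iInter, Set.mem_preimage, hSets, Finset.mem_univ, forall_true_left]
      constructor
      · intro h
        refine ⟨?_, ?_⟩
        · have := h e; simp at this; exact this
        · intro e' hne; have := h e'; simp [hne] at this; exact this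
      · rintro ⟨h1, h2⟩ e'
        by_cases he : e' = e
        · subst he; simp [h1]
        · simp [he, h2 e' he]
    -- measure of A e
    have hfalse : ∀ e' : C, (μ (sel e' ⁻¹' ({false} : Set Bool))).toReal = 1 - p := by
      intro e'
      have hset : sel e' ⁻¹' ({false} : Set Bool) = {ω | sel e' ω = true}ᶜ := by
        ext ω
        simp only [Set.mem_preimage, Set.mem_singleton_iff, Set.mem_compl_iff,
          Set.mem_setOf_eq, Bool.not_eq_true]
      have hmsT : MeasurableSet {ω | sel e' ω = true} := by
        have : {ω | sel e' ω = true} = sel e' ⁻¹' ({true} : Set Bool) := by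
          ext ω; simp
        rw [this]; exact (hmeas e') (measurableSet_singleton _)
      have hadd := measure_add_measure_compl (μ := μ) hmsT
      have hfin1 : μ {ω | sel e' ω = true} ≠ ⊤ := measure_ne_top μ _
      have hfin2 : μ {ω | sel e' ω = true}ᶜ ≠ ⊤ := measure_ne_top μ _
      have := congrArg ENNReal.toReal hadd
      rw [ENNReal.toReal_add hfin1 hfin2] at this
      simp only [measure_univ, ENNReal.toReal_one] at this
      rw [hset]
      have hpe := hprob e'
      linarith
    have htrue : ∀ e' : C, (μ (sel e' ⁻¹' ({true} : Set Bool))).toReal = p := by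
      intro e'
      have : sel e' ⁻¹' ({true} : Set Bool) = {ω | sel e' ω = true} := by
        ext ω; simp
      rw [this, hprob e']
    have hA_eq : ∀ e, (μ (A e)).toReal = p * (1 - p) ^ (C.card - 1) := by
      intro e
      have hprod := hindep.measure_inter_preimage_eq_mul (univ : Finset C)
        (sets := Sets e) (fun e' _ => hSets_meas e e')
      rw [hA]
      simp only []
      rw [hprod]
      rw [← Finset.mul_prod_erase (univ : Finset C) _ (Finset.mem_univ e)]
      rw [ENNReal.toReal_mul, ENNReal.toReal_prod]
      have h1 : (μ (sel e ⁻¹' Sets e e)).toReal = p := by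
        have : Sets e e = ({true} : Set Bool) := by simp [hSets]
        rw [this]; exact htrue e
      have h2 : ∀ e' ∈ (univ : Finset C).erase e,
          (μ (sel e' ⁻¹' Sets e e')).toReal = 1 - p := by
        intro e' he'
        have hne : e' ≠ e := (Finset.mem_erase.mp he').1
        have : Sets e e' = ({false} : Set Bool) := by simp [hSets, hne]
        rw [this]; exact hfalse e'
      rw [h1, Finset.prod_congr rfl h2, Finset.prod_const]
      congr 2
      rw [Finset.card_erase_of_mem (Finset.mem_univ e), Finset.card_univ, Fintype.card_coe]
    -- disjointness and inclusion
    have hdisj : Set.PairwiseDisjoint ((univ : Finset C) : Set C) A := by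
      intro e _ e' _ hne
      rw [Function.onFun, Set.disjoint_left]
      intro ω hω hω'
      rw [hmemA] at hω hω'
      have h1 := hω.1
      have h2 := hω'.2 e hne
      rw [h1] at h2
      simp at h2
    have hsub : ∀ e, A e ⊆ T := by
      intro e ω hω
      rw [hmemA] at hω
      have hfil : Finset.univ.filter (fun e' : C => sel e' ω = true) = {e} := by
        ext e'
        simp only [Finset.mem_filter, Finset.mem_univ, true_and, Finset.mem_singleton]
        constructor
        · intro ht
          by_contra hne
          have := hω.2 e' hne
          rw [this] at ht
          simp at ht
        · intro he; subst he; exact hω.1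
      simp only [hT, Set.mem_setOf_eq, hfil, Finset.card_singleton]
    have hUsub : (⋃ e ∈ (univ : Finset C), A e) ⊆ T := by
      apply Set.iUnion₂_subset
      intro e _
      exact hsub e
    have hsum : μ (⋃ e ∈ (univ : Finset C), A e) = ∑ e ∈ (univ : Finset C), μ (A e) :=
      measure_biUnion_finset hdisj (fun e _ => hA_meas e)
    have hmono : (μ (⋃ e ∈ (univ : Finset C), A e)).toReal ≤ (μ T).toReal :=
      ENNReal.toReal_mono (measure_ne_top μ T) (measure_mono hUsub)
    have htr : (∑ e ∈ (univ : Finset C), μ (A e)).toReal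
        = ∑ e ∈ (univ : Finset C), (μ (A e)).toReal :=
      ENNReal.toReal_sum (fun e _ => measure_ne_top μ _)
    have hfinal : (C.card : ℝ) * p * (1 - p) ^ (C.card - 1)
        = ∑ e ∈ (univ : Finset C), (μ (A e)).toReal := by
      rw [Finset.sum_congr rfl (fun e _ => hA_eq e), Finset.sum_const, Finset.card_univ,
        Fintype.card_coe, nsmul_eq_mul, mul_assoc]
    rw [ge_iff_le, hfinal, ← htr, ← hsum]
    exact hmono
  · -- 1/(2e) > 1/9
    have hE3 : Real.exp 1 < 3 := by
      have := Real.exp_one_lt_d9; linarith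
    have hEpos : (0 : ℝ) < Real.exp 1 := Real.exp_pos 1
    rw [gt_iff_lt, div_lt_div_iff₀ (by norm_num) (by positivity)]
    nlinarith
end

section
/- Combining the previous facts: if X_0,…,X_ℓ are non-increasing nonnegative integers with X_0 ≤ n, ℓ = 50c·log₂ n, and for each i the conditional probability (given X_0,…,X_{i-1}) of the event {X_{i-1} = 0 or X_i ≤ (7/8)X_{i-1}} is at least 1/7, then P(X_ℓ > 0) ≤ exp(-(50c log₂ n/21)(1-56/(50c))²) < n^{-c} for c ≥ 10 and n ≥ 2. -/
open MeasureTheory ProbabilityTheory Finset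
open scoped ENNReal

namespace LayeredAux
variable {Ω : Type*} [MeasurableSpace Ω]

/-- The "success" event at layer `i`. -/
def succSet (X : ℕ → Ω → ℕ) (i : ℕ) : Set Ω :=
  {ω | X (i - 1) ω = 0 ∨ (X i ω : ℝ) ≤ (7 / 8) * (X (i - 1) ω : ℝ)}

/-- Atoms of the σ-algebra generated by `X 0, …, X (i-1)`. -/
def atomF (X : ℕ → Ω → ℕ) (i : ℕ) (v : Fin i → ℕ) : Set Ω :=
  {ω | ∀ j : ℕ, ∀ h : j < i, X j ω = v ⟨j, h⟩}

lemma meas_succ (X : ℕ → Ω → ℕ) (hmeas : ∀ i, Measurable (X i)) (i : ℕ) :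
    MeasurableSet (succSet X i) := by
  have h : succSet X i =
      (fun ω => (X (i-1) ω, X i ω)) ⁻¹' {p : ℕ × ℕ | p.1 = 0 ∨ (p.2 : ℝ) ≤ (7/8) * (p.1 : ℝ)} := rfl
  rw [h]
  exact ((hmeas (i-1)).prodMk (hmeas i)) (Set.to_countable _).measurableSet

lemma meas_atom (X : ℕ → Ω → ℕ) (hmeas : ∀ i, Measurable (X i)) (i : ℕ) (x : ℕ → ℕ) :
    MeasurableSet {ω : Ω | ∀ j, j < i → X j ω = x j} := by
  have h : {ω : Ω | ∀ j, j < i → X j ω = x j} = ⋂ j ∈ Finset.range i, (X j) ⁻¹' {x j} := by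
    ext ω; simp [Set.mem_iInter]
  rw [h]
  exact MeasurableSet.biInter (Set.to_countable _)
    fun j _ => (hmeas j) (measurableSet_singleton _)

lemma meas_atomF (X : ℕ → Ω → ℕ) (hmeas : ∀ i, Measurable (X i)) (i : ℕ) (v : Fin i → ℕ) :
    MeasurableSet (atomF X i v) := by
  have h : atomF X i v = ⋂ (j : Fin i), (X j) ⁻¹' {v j} := by
    ext ω; simp [atomF, Set.mem_iInter]
    constructor
    · intro hh j; exact hh j j.2
    · intro hh j hj; exact hh ⟨j, hj⟩
  rw [h]
  exact MeasurableSet.iInter fun j => (hmeas j) (measurableSet_singleton _)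

lemma sum_atom (μ : Measure Ω) (X : ℕ → Ω → ℕ) (hmeas : ∀ i, Measurable (X i)) (i : ℕ)
    (B : Set Ω) (hB : MeasurableSet B) :
    μ B = ∑' v : Fin i → ℕ, μ (B ∩ atomF X i v) := by
  have hcover : B = ⋃ v : Fin i → ℕ, B ∩ atomF X i v := by
    ext ω
    simp only [Set.mem_iUnion, Set.mem_inter_iff]
    constructor
    · intro hω
      exact ⟨fun j => X j ω, hω, fun j hj => rfl⟩
    · rintro ⟨v, hω, -⟩; exact hω
  have hdisj : Pairwise (Function.onFun Disjoint fun v : Fin i → ℕ => B ∩ atomF X i v) := by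
    intro v w hvw
    simp only [Function.onFun, Set.disjoint_left]
    rintro ω ⟨-, hv⟩ ⟨-, hw⟩
    apply hvw
    funext j
    rw [← hv j j.2, ← hw j j.2]
  calc μ B = μ (⋃ v : Fin i → ℕ, B ∩ atomF X i v) := by rw [← hcover]
    _ = ∑' v : Fin i → ℕ, μ (B ∩ atomF X i v) :=
      measure_iUnion hdisj fun v => hB.inter (meas_atomF X hmeas i v)

lemma fail_atom_le (μ : Measure Ω) [IsProbabilityMeasure μ]
    (X : ℕ → Ω → ℕ) (hmeas : ∀ i, Measurable (X i)) (i : ℕ) (x : ℕ → ℕ)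
    (h : μ {ω | ∀ j, j < i → X j ω = x j} ≠ 0 →
      (μ[|{ω | ∀ j, j < i → X j ω = x j}]) (succSet X i) ≥ ENNReal.ofReal (1 / 7)) :
    μ ({ω | ∀ j, j < i → X j ω = x j} ∩ (succSet X i)ᶜ)
      ≤ (6/7 : ℝ≥0∞) * μ {ω | ∀ j, j < i → X j ω = x j} := by
  set a : Set Ω := {ω | ∀ j, j < i → X j ω = x j} with ha
  by_cases h0 : μ a = 0
  · calc μ (a ∩ (succSet X i)ᶜ) ≤ μ a := measure_mono Set.inter_subset_left
      _ = 0 := h0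
      _ ≤ _ := zero_le
  · haveI : IsProbabilityMeasure (μ[|a]) := cond_isProbabilityMeasure h0
    have hcomp : (μ[|a]) (succSet X i)ᶜ ≤ (6/7 : ℝ≥0∞) := by
      rw [prob_compl_eq_one_sub (meas_succ X hmeas i)]
      have h17 : ENNReal.ofReal (1/7) = (1/7 : ℝ≥0∞) := by
        rw [ENNReal.ofReal_div_of_pos (by norm_num)]
        norm_num
      have hs : (1/7 : ℝ≥0∞) ≤ (μ[|a]) (succSet X i) := h17 ▸ h h0
      have hsum : (1 : ℝ≥0∞) ≤ 6/7 + 1/7 := by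
        rw [ENNReal.div_add_div_same]
        norm_num [ENNReal.div_self]
      calc 1 - (μ[|a]) (succSet X i) ≤ 1 - 1/7 := tsub_le_tsub_left hs 1
        _ ≤ 6/7 := by rw [tsub_le_iff_right]; exact hsum
    have key : μ (a ∩ (succSet X i)ᶜ) = μ a * (μ[|a]) (succSet X i)ᶜ := by
      rw [cond_apply (meas_atom X hmeas i x) μ, ← mul_assoc,
        ENNReal.mul_inv_cancel h0 (measure_ne_top μ a), one_mul]
    rw [key, mul_comm]
    exact mul_le_mul_left hcomp _

lemma atomF_eq_atom (X : ℕ → Ω → ℕ) (i : ℕ) (v : Fin i → ℕ) :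
    atomF X i v = {ω : Ω | ∀ j, j < i → X j ω = (fun j => if h : j < i then v ⟨j, h⟩ else 0) j} := by
  ext ω
  constructor
  · intro hω j hj; simp only [hj, dif_pos]; exact hω j hj
  · intro hω j hj; have := hω j hj; simpa [hj] using this

lemma peel (μ : Measure Ω) [IsProbabilityMeasure μ]
    (X : ℕ → Ω → ℕ) (hmeas : ∀ i, Measurable (X i)) (ℓ : ℕ)
    (hcond : ∀ i, 1 ≤ i → i ≤ ℓ → ∀ x : ℕ → ℕ,
      μ {ω | ∀ j, j < i → X j ω = x j} ≠ 0 →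
      (μ[|{ω | ∀ j, j < i → X j ω = x j}]) (succSet X i) ≥ ENNReal.ofReal (1 / 7)) :
    ∀ (k : ℕ) (T : Finset ℕ), T.card = k → T ⊆ Icc 1 ℓ →
      μ (⋂ i ∈ T, (succSet X i)ᶜ) ≤ (6/7 : ℝ≥0∞) ^ k := by
  intro k
  induction k with
  | zero =>
    intro T hT _
    rw [Finset.card_eq_zero.mp hT]
    simp
  | succ k ih =>
    intro T hT hTsub
    have hne : T.Nonempty := Finset.card_pos.mp (hT ▸ k.succ_pos)
    set i := T.max' hne with hi
    have hiT : i ∈ T := T.max'_mem hne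
    have hiIcc := hTsub hiT
    rw [Finset.mem_Icc] at hiIcc
    set T' := T.erase i with hT'
    have hT'card : T'.card = k := by
      rw [hT', Finset.card_erase_of_mem hiT, hT]; rfl
    have hT'sub : T' ⊆ Icc 1 ℓ := (Finset.erase_subset _ _).trans hTsub
    set A := ⋂ j ∈ T', (succSet X j)ᶜ with hA
    have hAmeas : MeasurableSet A :=
      MeasurableSet.biInter (Set.to_countable _)
        fun j _ => (meas_succ X hmeas j).compl
    have hsplit : (⋂ j ∈ T, (succSet X j)ᶜ) = A ∩ (succSet X i)ᶜ := by
      conv_lhs => rw [← Finset.insert_erase hiT, Finset.set_biInter_insert]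
      rw [Set.inter_comm]
    have hstep : μ (A ∩ (succSet X i)ᶜ) ≤ (6/7 : ℝ≥0∞) * μ A := by
      rw [sum_atom μ X hmeas i (A ∩ (succSet X i)ᶜ) (hAmeas.inter (meas_succ X hmeas i).compl),
        sum_atom μ X hmeas i A hAmeas, ← ENNReal.tsum_mul_left]
      apply ENNReal.tsum_le_tsum
      intro v
      by_cases hsub : atomF X i v ⊆ A
      · have h1 : A ∩ (succSet X i)ᶜ ∩ atomF X i v ⊆
            {ω : Ω | ∀ j, j < i → X j ω = (fun j => if h : j < i then v ⟨j, h⟩ else 0) j}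
              ∩ (succSet X i)ᶜ := by
          rw [← atomF_eq_atom]
          intro ω hω
          exact ⟨hω.2, hω.1.2⟩
        have h2 : A ∩ atomF X i v = atomF X i v :=
          Set.inter_eq_self_of_subset_right hsub
        calc μ (A ∩ (succSet X i)ᶜ ∩ atomF X i v)
            ≤ μ ({ω : Ω | ∀ j, j < i → X j ω = (fun j => if h : j < i then v ⟨j, h⟩ else 0) j}
                ∩ (succSet X i)ᶜ) := measure_mono h1
          _ ≤ (6/7 : ℝ≥0∞) * μ {ω : Ω | ∀ j, j < i →
                X j ω = (fun j => if h : j < i then v ⟨j, h⟩ else 0) j} := by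
              apply fail_atom_le μ X hmeas i _ (hcond i hiIcc.1 hiIcc.2 _)
          _ = (6/7 : ℝ≥0∞) * μ (A ∩ atomF X i v) := by rw [h2, atomF_eq_atom X i v]
      · obtain ⟨ω₀, hω₀v, hω₀A⟩ := Set.not_subset.mp hsub
        have hdet : A ∩ atomF X i v = ∅ := by
          rw [Set.eq_empty_iff_forall_notMem]
          rintro ω ⟨hωA, hωv⟩
          apply hω₀A
          rw [hA, Set.mem_iInter₂] at hωA ⊢
          intro j hj
          have hjT : j ∈ T := Finset.mem_of_mem_erase hj
          have hjlt : j < i := lt_of_le_of_ne (T.le_max' j hjT) (Finset.ne_of_mem_erase hj)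
          have hj1lt : j - 1 < i := lt_of_le_of_lt (Nat.sub_le j 1) hjlt
          have e1 : X (j-1) ω₀ = X (j-1) ω := by
            rw [hω₀v (j-1) hj1lt, hωv (j-1) hj1lt]
          have e2 : X j ω₀ = X j ω := by rw [hω₀v j hjlt, hωv j hjlt]
          have := hωA j hj
          simp only [Set.mem_compl_iff, succSet, Set.mem_setOf_eq] at this ⊢
          rw [e1, e2]
          exact this
        have hempty : A ∩ (succSet X i)ᶜ ∩ atomF X i v = ∅ := by
          rw [Set.eq_empty_iff_forall_notMem]
          rintro ω ⟨⟨h1, -⟩, h2⟩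
          exact (Set.eq_empty_iff_forall_notMem.mp hdet) ω ⟨h1, h2⟩
        rw [hempty]
        simp
    calc μ (⋂ j ∈ T, (succSet X j)ᶜ) = μ (A ∩ (succSet X i)ᶜ) := by rw [hsplit]
      _ ≤ (6/7 : ℝ≥0∞) * μ A := hstep
      _ ≤ (6/7 : ℝ≥0∞) * (6/7 : ℝ≥0∞) ^ k :=
          mul_le_mul_right (ih T' hT'card hT'sub) _
      _ = (6/7 : ℝ≥0∞) ^ (k+1) := (pow_succ' _ _).symm

lemma trajectory (X : ℕ → Ω → ℕ) (ℓ n M : ℕ) (hn : 2 ≤ n)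
    (hM8 : (8:ℝ) * Real.logb 2 n ≤ M) (hMℓ : M ≤ ℓ)
    (hX0 : ∀ ω, X 0 ω ≤ n) (hmono : ∀ i ω, i < ℓ → X (i + 1) ω ≤ X i ω)
    (ω : Ω) (hω : 0 < X ℓ ω) :
    ∃ T ∈ powersetCard (ℓ - (M-1)) (Icc 1 ℓ), ω ∈ ⋂ i ∈ T, (succSet X i)ᶜ := by
  classical
  have hn0 : (0:ℝ) < n := by positivity
  have hL1 : (1:ℝ) ≤ Real.logb 2 n := by
    rw [show (1:ℝ) = Real.logb 2 2 by simp]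
    exact Real.logb_le_logb_of_le (by norm_num) (by norm_num) (by exact_mod_cast hn)
  have hdec : ∀ a b : ℕ, a ≤ b → b ≤ ℓ → X b ω ≤ X a ω := by
    intro a b hab
    induction b, hab using Nat.le_induction with
    | base => intro _; exact le_rfl
    | succ b hab ih =>
      intro hb
      exact le_trans (hmono b ω (by omega)) (ih (by omega))
  have hpos : ∀ j, j ≤ ℓ → 0 < X j ω := fun j hj => lt_of_lt_of_le hω (hdec j ℓ hj le_rfl)
  set S : Finset ℕ := (Icc 1 ℓ).filter (fun i => ω ∈ succSet X i) with hS
  have hgeo : ∀ k, k ≤ ℓ →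
      (X k ω : ℝ) ≤ (7/8) ^ (((Icc 1 k).filter (fun i => ω ∈ succSet X i)).card) * n := by
    intro k
    induction k with
    | zero =>
      intro _
      simp only [show Finset.Icc 1 0 = ∅ by rfl, filter_empty, card_empty, pow_zero, one_mul]
      exact_mod_cast hX0 ω
    | succ k ih =>
      intro hk
      have hk' : k ≤ ℓ := by omega
      have hIcc : Icc 1 (k+1) = insert (k+1) (Icc 1 k) := by
        ext j; simp only [Finset.mem_Icc, Finset.mem_insert]; omega
      have hnotmem : k + 1 ∉ Icc 1 k := by simp
      by_cases hs : ω ∈ succSet X (k+1)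
      · have hcard : ((Icc 1 (k+1)).filter (fun i => ω ∈ succSet X i)).card
            = ((Icc 1 k).filter (fun i => ω ∈ succSet X i)).card + 1 := by
          rw [hIcc, Finset.filter_insert, if_pos hs, Finset.card_insert_of_notMem
            (fun hmem => hnotmem (Finset.mem_filter.mp hmem).1)]
        have hshr : (X (k+1) ω : ℝ) ≤ (7/8) * (X k ω : ℝ) := by
          rcases hs with h0 | hle
          · exfalso
            simp only [Nat.add_sub_cancel] at h0
            have := hpos k hk'
            omega
          · simpa using hle
        rw [hcard]
        calc (X (k+1) ω : ℝ) ≤ (7/8) * (X k ω : ℝ) := hshr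
          _ ≤ (7/8) * ((7/8) ^ (((Icc 1 k).filter (fun i => ω ∈ succSet X i)).card) * n) := by
              apply mul_le_mul_of_nonneg_left (ih hk') (by norm_num)
          _ = (7/8) ^ (((Icc 1 k).filter (fun i => ω ∈ succSet X i)).card + 1) * n := by
              ring
      · have hcard : ((Icc 1 (k+1)).filter (fun i => ω ∈ succSet X i)).card
            = ((Icc 1 k).filter (fun i => ω ∈ succSet X i)).card := by
          rw [hIcc, Finset.filter_insert, if_neg hs]
        rw [hcard]
        calc (X (k+1) ω : ℝ) ≤ (X k ω : ℝ) := by exact_mod_cast hmono k ω (by omega)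
          _ ≤ _ := ih hk'
  have hXl1 : (1:ℝ) ≤ X ℓ ω := by exact_mod_cast hω
  have hgeoℓ : (1:ℝ) ≤ (7/8) ^ S.card * n := le_trans hXl1 (hgeo ℓ le_rfl)
  have hpow : ((8:ℝ)/7) ^ S.card ≤ n := by
    have h78 : (0:ℝ) < (7/8) ^ S.card := by positivity
    rw [show ((8:ℝ)/7) = ((7:ℝ)/8)⁻¹ by norm_num, inv_pow, inv_le_iff_one_le_mul₀ h78]
    linarith [hgeoℓ]
  have hsM : S.card < M := by
    rcases Nat.eq_zero_or_pos S.card with h0 | h1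
    · have h8 : (8:ℝ) ≤ M := le_trans (by linarith) hM8
      have h8' : (8:ℕ) ≤ M := by exact_mod_cast h8
      omega
    · have hbase : (2:ℝ) ^ ((1:ℝ)/8) < 8/7 := by
        have h2 : ((2:ℝ) ^ ((1:ℝ)/8)) ^ (8:ℕ) = 2 := by
          rw [← Real.rpow_natCast ((2:ℝ) ^ ((1:ℝ)/8)) 8, ← Real.rpow_mul (by norm_num)]
          norm_num
        apply lt_of_pow_lt_pow_left₀ 8 (by norm_num)
        rw [h2]; norm_num
      have hlt : (2:ℝ) ^ ((S.card:ℝ)/8) < n := by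
        have heq : (2:ℝ) ^ ((S.card:ℝ)/8) = ((2:ℝ) ^ ((1:ℝ)/8)) ^ S.card := by
          rw [← Real.rpow_natCast ((2:ℝ) ^ ((1:ℝ)/8)) S.card, ← Real.rpow_mul (by norm_num)]
          ring_nf
        rw [heq]
        calc ((2:ℝ)^((1:ℝ)/8))^S.card < (8/7)^S.card :=
              pow_lt_pow_left₀ hbase (by positivity) (by omega)
          _ ≤ n := hpow
      have hs8 : (S.card : ℝ)/8 < Real.logb 2 n := by
        rw [Real.lt_logb_iff_rpow_lt (by norm_num) hn0]
        exact hlt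
      have : (S.card : ℝ) < M := by
        calc (S.card : ℝ) < 8 * Real.logb 2 n := by linarith
          _ ≤ M := hM8
      exact_mod_cast this
  set Fail := (Icc 1 ℓ).filter (fun i => ω ∉ succSet X i) with hF
  have hcards : S.card + Fail.card = ℓ := by
    rw [hS, hF, Finset.card_filter_add_card_filter_not, Nat.card_Icc]
    omega
  have hKle : ℓ - (M-1) ≤ Fail.card := by omega
  obtain ⟨T, hTsub, hTcard⟩ := Finset.exists_subset_card_eq hKle
  refine ⟨T, ?_, ?_⟩
  · rw [Finset.mem_powersetCard]
    exact ⟨hTsub.trans (filter_subset _ _), hTcard⟩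
  · rw [Set.mem_iInter₂]
    intro i hi
    have hmem := hTsub hi
    rw [hF, Finset.mem_filter] at hmem
    exact hmem.2

lemma measure_bound (μ : Measure Ω) [IsProbabilityMeasure μ]
    (X : ℕ → Ω → ℕ) (hmeas : ∀ i, Measurable (X i)) (ℓ n M : ℕ) (hn : 2 ≤ n)
    (hM8 : (8:ℝ) * Real.logb 2 n ≤ M) (hMℓ : M ≤ ℓ)
    (hX0 : ∀ ω, X 0 ω ≤ n) (hmono : ∀ i ω, i < ℓ → X (i + 1) ω ≤ X i ω)
    (hcond : ∀ i, 1 ≤ i → i ≤ ℓ → ∀ x : ℕ → ℕ,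
      μ {ω | ∀ j, j < i → X j ω = x j} ≠ 0 →
      (μ[|{ω | ∀ j, j < i → X j ω = x j}]) (succSet X i) ≥ ENNReal.ofReal (1 / 7)) :
    μ {ω | 0 < X ℓ ω} ≤ (ℓ.choose (ℓ - (M-1)) : ℝ≥0∞) * (6/7 : ℝ≥0∞) ^ (ℓ - (M-1)) := by
  set K := ℓ - (M-1) with hK
  have hsub : {ω | 0 < X ℓ ω} ⊆
      ⋃ T ∈ (powersetCard K (Icc 1 ℓ) : Finset (Finset ℕ)), ⋂ i ∈ T, (succSet X i)ᶜ := by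
    intro ω hω
    obtain ⟨T, hT1, hT2⟩ := trajectory X ℓ n M hn hM8 hMℓ hX0 hmono ω hω
    exact Set.mem_biUnion hT1 hT2
  calc μ {ω | 0 < X ℓ ω}
      ≤ μ (⋃ T ∈ (powersetCard K (Icc 1 ℓ) : Finset (Finset ℕ)), ⋂ i ∈ T, (succSet X i)ᶜ) :=
        measure_mono hsub
    _ ≤ ∑ T ∈ (powersetCard K (Icc 1 ℓ) : Finset (Finset ℕ)), μ (⋂ i ∈ T, (succSet X i)ᶜ) :=
        measure_biUnion_finset_le _ _
    _ ≤ ∑ _T ∈ (powersetCard K (Icc 1 ℓ) : Finset (Finset ℕ)), (6/7 : ℝ≥0∞) ^ K := by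
        apply Finset.sum_le_sum
        intro T hT
        rw [Finset.mem_powersetCard] at hT
        exact peel μ X hmeas ℓ hcond K T hT.2 hT.1
    _ = ((powersetCard K (Icc 1 ℓ)).card : ℝ≥0∞) * (6/7 : ℝ≥0∞) ^ K := by
        rw [Finset.sum_const, nsmul_eq_mul]
    _ = (ℓ.choose K : ℝ≥0∞) * (6/7 : ℝ≥0∞) ^ K := by
        rw [Finset.card_powersetCard, Nat.card_Icc]
        norm_num

lemma fact_lower : ∀ m : ℕ, ((m:ℝ)/3)^m ≤ m.factorial := by
  intro m
  induction m with
  | zero => simp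
  | succ m ih =>
    have key : ((m:ℝ)+1)^m ≤ 3 * (m:ℝ)^m := by
      rcases Nat.eq_zero_or_pos m with h0|h1
      · subst h0; norm_num
      · have hm : (0:ℝ) < m := by exact_mod_cast h1
        have heq : ((m:ℝ)+1)^m = ((1 + 1/(m:ℝ))^m) * (m:ℝ)^m := by
          rw [← mul_pow]; congr 1; field_simp
        rw [heq]
        have h2 : (1 + 1/(m:ℝ))^m ≤ Real.exp 1 := by
          calc (1 + 1/(m:ℝ))^m ≤ (Real.exp (1/m))^m := by
                apply pow_le_pow_left₀ (by positivity)
                linarith [Real.add_one_le_exp (1/(m:ℝ))]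
            _ = Real.exp 1 := by
                rw [← Real.exp_nat_mul]
                congr 1; field_simp
        have h3 : Real.exp 1 ≤ 3 := by linarith [Real.exp_one_lt_d9]
        have h4 : (0:ℝ) ≤ (m:ℝ)^m := by positivity
        nlinarith
    have hfs : (((m+1:ℕ)).factorial : ℝ) = ((m:ℝ)+1) * (m.factorial : ℝ) := by
      rw [Nat.factorial_succ]; push_cast; ring
    have h30 : (0:ℝ) < 3 ^ m := by positivity
    calc (((m+1:ℕ):ℝ)/3)^(m+1) = ((m:ℝ)+1) * (((m:ℝ)+1)^m / 3^(m+1)) := by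
          push_cast
          rw [div_pow]
          ring
      _ ≤ ((m:ℝ)+1) * ((3 * (m:ℝ)^m) / 3^(m+1)) := by
          apply mul_le_mul_of_nonneg_left _ (by positivity)
          exact div_le_div_of_nonneg_right key (by positivity)
      _ = ((m:ℝ)+1) * (((m:ℝ)/3)^m) := by
          rw [div_pow, pow_succ]
          field_simp
      _ ≤ ((m:ℝ)+1) * (m.factorial : ℝ) := by
          apply mul_le_mul_of_nonneg_left ih (by positivity)
      _ = _ := hfs.symm

lemma log22c (c : ℝ) (hc : 10 ≤ c) : Real.log (22 * c) ≤ c/10 + 166/37 := by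
  have hc0 : (0:ℝ) < c := by linarith
  have h1 : Real.log (22 * c) = Real.log (c/10) + Real.log 220 := by
    rw [← Real.log_mul (by positivity) (by norm_num)]
    congr 1; ring
  have h2 : Real.log (c/10) ≤ c/10 - 1 := Real.log_le_sub_one_of_pos (by positivity)
  have he5 : (148:ℝ) ≤ Real.exp 5 := by
    have h := Real.exp_one_gt_d9
    have h5 : Real.exp 5 = (Real.exp 1)^(5:ℕ) := by
      rw [← Real.exp_nat_mul]; norm_num
    rw [h5]
    have h2' : (2.7182818283:ℝ)^(5:ℕ) ≤ (Real.exp 1)^(5:ℕ) :=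
      pow_le_pow_left₀ (by norm_num) (le_of_lt h) 5
    nlinarith [h2']
  have h3 : Real.log 220 ≤ 55/37 + 4 := by
    have heq : Real.log 220 = Real.log (220 / Real.exp 5) + 5 := by
      rw [Real.log_div (by norm_num) (Real.exp_ne_zero 5), Real.log_exp]
      ring
    rw [heq]
    have hp : (0:ℝ) < 220 / Real.exp 5 := by positivity
    have hle := Real.log_le_sub_one_of_pos hp
    have hq : 220 / Real.exp 5 ≤ 220/148 := by
      apply div_le_div_of_nonneg_left (by norm_num) (by norm_num) he5
    have : Real.log (220 / Real.exp 5) ≤ 220/148 - 1 := by linarith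
    linarith
  linarith

set_option maxHeartbeats 1000000 in
lemma numeric (n ℓ M : ℕ) (c : ℝ) (hn : 2 ≤ n) (hc : 10 ≤ c)
    (hℓ : (ℓ:ℝ) = 50 * c * Real.logb 2 n)
    (hM1 : 1 ≤ M)
    (hM8 : (8:ℝ) * Real.logb 2 n ≤ M) (hM8' : (M:ℝ) < 8 * Real.logb 2 n + 1) :
    (ℓ.choose (ℓ - (M-1)) : ℝ) * ((6:ℝ)/7) ^ (ℓ - (M-1)) ≤
      Real.exp (-(50 * c * Real.logb 2 n / 21) * (1 - 56 / (50 * c)) ^ 2) := by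
  have hc0 : (0:ℝ) < c := by linarith
  set L := Real.logb 2 n with hL
  have hL1 : (1:ℝ) ≤ L := by
    rw [hL, show (1:ℝ) = Real.logb 2 2 by simp]
    exact Real.logb_le_logb_of_le (by norm_num) (by norm_num) (by exact_mod_cast hn)
  set m : ℕ := M - 1 with hm
  have hmr : (m:ℝ) = (M:ℝ) - 1 := by
    rw [hm]; push_cast [hM1]; ring
  have hmub : (m:ℝ) < 8 * L := by rw [hmr]; linarith
  have hmlb : 7 * L ≤ (m:ℝ) := by rw [hmr]; nlinarith
  have hm0 : 0 < m := by
    have : (0:ℝ) < m := by linarith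
    exact_mod_cast this
  have hmℓ : m ≤ ℓ := by
    have : (m:ℝ) ≤ (ℓ:ℝ) := by rw [hℓ]; nlinarith
    exact_mod_cast this
  have hKeq : ℓ - (M-1) = ℓ - m := rfl
  have hKr : ((ℓ - m : ℕ) : ℝ) = (ℓ:ℝ) - m := by
    push_cast [hmℓ]; ring
  have hchoose : (ℓ.choose (ℓ - m) : ℝ) ≤ (22 * c) ^ m := by
    have h1 : ℓ.choose (ℓ - m) = ℓ.choose m := Nat.choose_symm hmℓ
    have h2 : (ℓ.choose m : ℝ) ≤ (ℓ:ℝ)^m / m.factorial := Nat.choose_le_pow_div m ℓ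
    have h3 : (ℓ:ℝ)^m / m.factorial ≤ (ℓ:ℝ)^m / ((m:ℝ)/3)^m := by
      apply div_le_div_of_nonneg_left (by positivity) (by positivity) (fact_lower m)
    have h4 : (ℓ:ℝ)^m / ((m:ℝ)/3)^m = (3 * (ℓ:ℝ) / m)^m := by
      have hmne : ((m:ℝ)) ≠ 0 := by positivity
      rw [div_pow, div_pow, mul_pow]
      field_simp
    have h5 : 3 * (ℓ:ℝ) / m ≤ 22 * c := by
      rw [div_le_iff₀ (by exact_mod_cast hm0)]
      rw [hℓ]
      nlinarith
    have h6 : (3 * (ℓ:ℝ) / m)^m ≤ (22*c)^m := by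
      apply pow_le_pow_left₀ (by positivity) h5
    rw [h1]
    calc (ℓ.choose m : ℝ) ≤ (ℓ:ℝ)^m / m.factorial := h2
      _ ≤ (ℓ:ℝ)^m / ((m:ℝ)/3)^m := h3
      _ = (3 * (ℓ:ℝ) / m)^m := h4
      _ ≤ (22*c)^m := h6
  set K : ℕ := ℓ - m with hK
  set δ : ℝ := 1 - 56 / (50 * c) with hδ
  have hδ1 : δ ≤ 1 := by rw [hδ]; have : 0 < 56/(50*c) := by positivity
                         linarith
  have hδ0 : 0 ≤ δ := by
    rw [hδ]
    have : 56/(50*c) ≤ 56/500 := by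
      apply div_le_div_of_nonneg_left (by norm_num) (by norm_num) (by linarith)
    linarith
  have hlogK : (1:ℝ)/7 ≤ Real.log (7/6) := by
    have := Real.one_sub_inv_le_log_of_pos (x := (7:ℝ)/6) (by norm_num)
    calc (1:ℝ)/7 = 1 - ((7:ℝ)/6)⁻¹ := by norm_num
      _ ≤ Real.log (7/6) := this
  have hlog22 : Real.log (22*c) ≤ c/10 + 166/37 := log22c c hc
  have hlog22pos : 0 ≤ Real.log (22*c) := by
    apply Real.log_nonneg; nlinarith
  have hexp : (m:ℝ) * Real.log (22*c) - (K:ℝ) * Real.log (7/6)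
      ≤ -(50 * c * L / 21) * δ^2 := by
    have hKlb : 50*c*L - 8*L ≤ (K:ℝ) := by
      rw [hK, hKr, hℓ]; linarith
    have hKpos : (0:ℝ) ≤ K := by positivity
    have t1 : (m:ℝ) * Real.log (22*c) ≤ 8*L * (c/10 + 166/37) := by
      apply mul_le_mul (le_of_lt hmub) hlog22 hlog22pos (by nlinarith)
    have t2 : (50*c*L - 8*L) * (1/7) ≤ (K:ℝ) * Real.log (7/6) := by
      apply mul_le_mul hKlb hlogK (by norm_num) hKpos
    have t3 : -(50 * c * L / 21) * δ^2 ≥ -(50*c*L/21) := by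
      have h1 : δ^2 ≤ 1 := pow_le_one₀ hδ0 hδ1
      have h2 : (0:ℝ) ≤ 50*c*L/21 := by positivity
      have h3 := mul_le_mul_of_nonneg_left h1 h2
      rw [mul_one] at h3
      linarith
    have t4 : 8*L * (c/10 + 166/37) - (50*c*L - 8*L) * (1/7) ≤ -(50*c*L/21) := by
      have hcoef : (0:ℝ) ≤ 416/105 * c - 9592/259 := by linarith
      have hh := mul_nonneg (by linarith : (0:ℝ) ≤ L) hcoef
      nlinarith [hh]
    linarith
  calc (ℓ.choose (ℓ - (M-1)) : ℝ) * ((6:ℝ)/7) ^ (ℓ - (M-1))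
      ≤ (22*c)^m * ((6:ℝ)/7)^K := by
        rw [hKeq]
        apply mul_le_mul_of_nonneg_right hchoose (by positivity)
    _ = Real.exp ((m:ℝ) * Real.log (22*c) - (K:ℝ) * Real.log (7/6)) := by
        have e1 : ((22:ℝ)*c)^m = Real.exp ((m:ℝ) * Real.log (22*c)) := by
          rw [← Real.log_pow, Real.exp_log (by positivity)]
        have e2 : ((6:ℝ)/7)^K = Real.exp (-((K:ℝ) * Real.log (7/6))) := by
          have h67 : ((6:ℝ)/7) = ((7:ℝ)/6)⁻¹ := by norm_num
          rw [h67, inv_pow, ← Real.log_pow, ← Real.log_inv, Real.exp_log (by positivity)]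
        rw [sub_eq_add_neg, Real.exp_add, ← e1, ← e2]
    _ ≤ Real.exp (-(50 * c * L / 21) * δ^2) := Real.exp_le_exp.mpr hexp
    _ = _ := by rw [hL, hδ]

lemma second (n : ℕ) (c : ℝ) (hn : 2 ≤ n) (hc : 10 ≤ c) :
    Real.exp (-(50 * c * Real.logb 2 n / 21) * (1 - 56 / (50 * c)) ^ 2) < (n : ℝ) ^ (-c) := by
  have hc0 : (0:ℝ) < c := by linarith
  have hn0 : (0:ℝ) < n := by positivity
  set L := Real.logb 2 n with hL
  have hL1 : (1:ℝ) ≤ L := by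
    rw [hL, show (1:ℝ) = Real.logb 2 2 by simp]
    exact Real.logb_le_logb_of_le (by norm_num) (by norm_num) (by exact_mod_cast hn)
  rw [Real.rpow_def_of_pos hn0]
  apply Real.exp_lt_exp.mpr
  have hlogn : Real.log n = L * Real.log 2 := by
    rw [hL, Real.logb]
    field_simp
  rw [hlogn]
  have hlog2 : Real.log 2 < 0.6931471808 := Real.log_two_lt_d9
  have hlog2pos : (0:ℝ) < Real.log 2 := Real.log_pos (by norm_num)
  set δ : ℝ := 1 - 56 / (50 * c) with hδ
  have hδlb : (111:ℝ)/125 ≤ δ := by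
    rw [hδ]
    have : 56/(50*c) ≤ 56/500 := by
      apply div_le_div_of_nonneg_left (by norm_num) (by norm_num) (by linarith)
    linarith
  have hδ2 : (12321:ℝ)/15625 ≤ δ^2 := by nlinarith [hδlb]
  have hcL : (0:ℝ) < c * L := by nlinarith
  have hfac : (0:ℝ) ≤ 50*c*L/21 := by nlinarith
  have hmain := mul_le_mul_of_nonneg_left hδ2 hfac
  have key : c * L * Real.log 2 < c * L * (50/21 * (12321/15625)) := by
    apply mul_lt_mul_of_pos_left _ hcL
    linarith
  nlinarith [hmain, key]

end LayeredAux

open LayeredAux in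
/-- Combined failure-probability bound for the layered process: if the `X_i`
are non-increasing nonnegative integers with `X_0 ≤ n`, `ℓ = 50c·log₂ n`, and
conditioned on any values of `X_0,…,X_{i-1}` the event
`{X_{i-1} = 0 ∨ X_i ≤ (7/8)X_{i-1}}` has probability at least `1/7`, then
`P(X_ℓ > 0) ≤ exp(-(50c·log₂ n/21)(1 - 56/(50c))²) < n^{-c}`. -/
theorem layered_failure_bound {Ω : Type*} [MeasurableSpace Ω]
    (μ : Measure Ω) [IsProbabilityMeasure μ] (n ℓ : ℕ) (c : ℝ)
    (hn : 2 ≤ n) (hc : 10 ≤ c)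
    (hℓ : (ℓ : ℝ) = 50 * c * Real.logb 2 n)
    (X : ℕ → Ω → ℕ) (hmeas : ∀ i, Measurable (X i))
    (hX0 : ∀ ω, X 0 ω ≤ n)
    (hmono : ∀ i ω, i < ℓ → X (i + 1) ω ≤ X i ω)
    (hcond : ∀ i, 1 ≤ i → i ≤ ℓ → ∀ x : ℕ → ℕ,
      μ {ω | ∀ j, j < i → X j ω = x j} ≠ 0 →
      (μ[|{ω | ∀ j, j < i → X j ω = x j}])
          {ω | X (i - 1) ω = 0 ∨ (X i ω : ℝ) ≤ (7 / 8) * (X (i - 1) ω : ℝ)}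
        ≥ ENNReal.ofReal (1 / 7)) :
    (μ {ω | 0 < X ℓ ω}).toReal
        ≤ Real.exp (-(50 * c * Real.logb 2 n / 21) * (1 - 56 / (50 * c)) ^ 2)
      ∧ Real.exp (-(50 * c * Real.logb 2 n / 21) * (1 - 56 / (50 * c)) ^ 2)
          < (n : ℝ) ^ (-c) := by
  have hc0 : (0:ℝ) < c := by linarith
  have hL1 : (1:ℝ) ≤ Real.logb 2 n := by
    rw [show (1:ℝ) = Real.logb 2 2 by simp]
    exact Real.logb_le_logb_of_le (by norm_num) (by norm_num) (by exact_mod_cast hn)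
  set M : ℕ := ⌈8 * Real.logb 2 n⌉₊ with hM
  have hM8 : (8:ℝ) * Real.logb 2 n ≤ M := Nat.le_ceil _
  have hM8' : (M:ℝ) < 8 * Real.logb 2 n + 1 :=
    Nat.ceil_lt_add_one (by positivity)
  have hM1 : 1 ≤ M := by
    have h1 : (1:ℝ) ≤ M := by linarith
    exact_mod_cast h1
  have hMℓ : M ≤ ℓ := by
    have h1 : (M:ℝ) ≤ ℓ := by rw [hℓ]; nlinarith
    exact_mod_cast h1
  constructor
  · have h1 := measure_bound μ X hmeas ℓ n M hn hM8 hMℓ hX0 hmono hcond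
    have hne : ((ℓ.choose (ℓ-(M-1)) : ℝ≥0∞) * (6/7 : ℝ≥0∞)^(ℓ-(M-1))) ≠ ⊤ := by
      apply ENNReal.mul_ne_top (ENNReal.natCast_ne_top _)
      apply ENNReal.pow_ne_top
      exact (ENNReal.div_lt_top (by norm_num) (by norm_num)).ne
    have h2 := ENNReal.toReal_mono hne h1
    rw [ENNReal.toReal_mul, ENNReal.toReal_pow, ENNReal.toReal_div] at h2
    simp only [ENNReal.toReal_natCast, ENNReal.toReal_ofNat] at h2
    exact h2.trans (numeric n ℓ M c hn hc hℓ hM1 hM8 hM8')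
  · exact second n c hn hc
end
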